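/- Let G = (V, E) be a finite simple 3-regular graph and let S ⊆ V be a minimal co-secure dominating set of G. Then there exists a double dominating set S' of G with S ⊆ S' and |S'| ≤ 2|S|. -/
import Mathlib


/-- `D` is a dominating set of `G`: every vertex outside `D` has a neighbor in `D`. -/
def IsDomSet {V : Type*} (G : SimpleGraph V) (D : Set V) : Prop :=
  ∀ v ∉ D, ∃ u ∈ D, G.Adj u v

/-- `S` is a co-secure dominating set of `G`. -/
def IsCSDS {V : Type*} (G : SimpleGraph V) (S : Set V) : Prop :=
  IsDomSet G S ∧ ∀ u ∈ S, ∃ v, v ∉ S ∧ G.Adj u v ∧ IsDomSet G (S \ {u} ∪ {v})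

/-- `D` is a double dominating set of `G`: every vertex outside `D` has at
least two neighbors in `D`. -/
def IsDoubleDomSet {V : Type*} (G : SimpleGraph V) (D : Set V) : Prop :=
  ∀ v ∉ D, 2 ≤ (G.neighborSet v ∩ D).ncard

theorem stmt15 {V : Type*} [Fintype V] (G : SimpleGraph V)
    (hreg : ∀ v : V, (G.neighborSet v).ncard = 3)
    (S : Set V) (hS : IsCSDS G S)
    (hmin : ∀ S' ⊂ S, ¬ IsCSDS G S') :
    ∃ S' : Set V, IsDoubleDomSet G S' ∧ S ⊆ S' ∧ S'.ncard ≤ 2 * S.ncard := by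
  classical
  have := Fintype.ofFinite V
  -- choice function for replacements
  have hrep : ∀ u, u ∈ S → ∃ v, v ∉ S ∧ G.Adj u v ∧ IsDomSet G (S \ {u} ∪ {v}) := hS.2
  set f : V → V := fun u => if h : u ∈ S then (hrep u h).choose else u with hf
  have hfspec : ∀ u (h : u ∈ S),
      f u ∉ S ∧ G.Adj u (f u) ∧ IsDomSet G (S \ {u} ∪ {f u}) := by
    intro u h
    simpa [hf, dif_pos h] using (hrep u h).choose_spec
  refine ⟨S ∪ f '' S, ?_, Set.subset_union_left, ?_⟩
  · intro w hw
    have hwS : w ∉ S := fun h => hw (Or.inl h)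
    obtain ⟨u, huS, hadj⟩ := hS.1 w hwS
    have hspec := hfspec u huS
    have hwfu : w ∉ S \ {u} ∪ {f u} := by
      rintro (⟨h1, _⟩ | h2)
      · exact hwS h1
      · exact hw (Or.inr ⟨u, huS, (Set.mem_singleton_iff.mp h2).symm⟩)
    obtain ⟨x, hxmem, hxadj⟩ := hspec.2.2 w hwfu
    have hxS' : x ∈ S ∪ f '' S := by
      rcases hxmem with ⟨h1, _⟩ | h2
      · exact Or.inl h1
      · exact Or.inr ⟨u, huS, (Set.mem_singleton_iff.mp h2).symm⟩
    have hxu : x ≠ u := by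
      rintro rfl
      rcases hxmem with ⟨_, h1⟩ | h2
      · exact h1 rfl
      · have := (hfspec x huS).1
        rw [Set.mem_singleton_iff.mp h2] at huS
        exact this huS
    rw [show (2 : ℕ) = 1 + 1 from rfl]
    rw [Nat.add_one_le_iff]
    rw [Set.one_lt_ncard_iff (Set.toFinite _)]
    exact ⟨u, x, ⟨hadj.symm, Or.inl huS⟩, ⟨hxadj.symm, hxS'⟩, fun h => hxu h.symm⟩
  · calc (S ∪ f '' S).ncard ≤ S.ncard + (f '' S).ncard := Set.ncard_union_le _ _
      _ ≤ S.ncard + S.ncard := by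
          exact Nat.add_le_add_left (Set.ncard_image_le (Set.toFinite _)) _
      _ = 2 * S.ncard := by ring
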